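/- Let L be a Lie superalgebra over a field of characteristic ≠ 2 and J° = L ⊕ ⟨1̄⟩ ⊕ L̄ the augmentation ideal of Jor(L). Then (a²)² = 0 for every a ∈ J°. -/

import Mathlib

noncomputable section

/-- The sign `(-1)^i` for `i : ZMod 2`. -/
def sgn (K : Type) [Field K] (i : ZMod 2) : K := if i = 0 then 1 else -1

variable (K : Type) [Field K]

variable {V : Type} [AddCommGroup V] [Module K V]

/-- The linear span of all products `μ a b` with `a ∈ S`, `b ∈ T`. -/
def mulSpan (μ : V →ₗ[K] V →ₗ[K] V) (S T : Submodule K V) : Submodule K V :=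
  Submodule.span K {w | ∃ a ∈ S, ∃ b ∈ T, w = μ a b}

/-- A two-sided ideal of a (nonassociative) algebra with product `μ`. -/
def IsIdeal (μ : V →ₗ[K] V →ₗ[K] V) (I : Submodule K V) : Prop :=
  ∀ a : V, ∀ b ∈ I, μ a b ∈ I ∧ μ b a ∈ I

/-- The product respects the `ZMod 2`-grading. -/
def GradedMul (g : ZMod 2 → Submodule K V) (μ : V →ₗ[K] V →ₗ[K] V) : Prop :=
  ∀ i j : ZMod 2, ∀ a ∈ g i, ∀ b ∈ g j, μ a b ∈ g (i + j)

/-- Supercommutativity: `a b = (-1)^{|a||b|} b a` on homogeneous elements. -/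
def SuperComm (g : ZMod 2 → Submodule K V) (μ : V →ₗ[K] V →ₗ[K] V) : Prop :=
  ∀ i j : ZMod 2, ∀ a ∈ g i, ∀ b ∈ g j, μ a b = sgn K (i * j) • μ b a

/-- The linearized super Jordan identity on homogeneous elements. -/
def SuperJordan (g : ZMod 2 → Submodule K V) (μ : V →ₗ[K] V →ₗ[K] V) : Prop :=
  ∀ ia ib ic id : ZMod 2, ∀ a ∈ g ia, ∀ b ∈ g ib, ∀ c ∈ g ic, ∀ d ∈ g id,
    μ (μ a b) (μ c d) + sgn K (ib * ic) • μ (μ a c) (μ b d)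
        + sgn K ((ib + ic) * id) • μ (μ a d) (μ b c)
      = μ (μ (μ a b) c) d + sgn K (ib * (ic + id) + ic * id) • μ (μ (μ a d) c) b
        + sgn K (ia * (ib + ic + id) + ic * id) • μ (μ (μ b d) c) a

/-- A `ZMod 2`-graded algebra which is a Jordan superalgebra. -/
structure IsJordanSuper (g : ZMod 2 → Submodule K V) (μ : V →ₗ[K] V →ₗ[K] V) : Prop where
  internal : DirectSum.IsInternal g
  graded : GradedMul K g μ
  comm : SuperComm K g μ
  jordan : SuperJordan K g μ

/-- A `ZMod 2`-graded algebra which is a Lie superalgebra. -/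
structure IsLieSuper (g : ZMod 2 → Submodule K V) (br : V →ₗ[K] V →ₗ[K] V) : Prop where
  internal : DirectSum.IsInternal g
  graded : GradedMul K g br
  anti : ∀ i j : ZMod 2, ∀ x ∈ g i, ∀ y ∈ g j, br x y = -(sgn K (i * j)) • br y x
  jacobi : ∀ i j k : ZMod 2, ∀ x ∈ g i, ∀ y ∈ g j, ∀ z ∈ g k,
    br x (br y z) = br (br x y) z + sgn K (i * j) • br y (br x z)

/-- A Poisson superalgebra structure: a supercommutative associative unital product `m`
and a super Lie bracket `p` related by the super Leibniz rule. -/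
structure IsPoissonSuper (g : ZMod 2 → Submodule K V)
    (m p : V →ₗ[K] V →ₗ[K] V) (e : V) : Prop where
  internal : DirectSum.IsInternal g
  m_graded : GradedMul K g m
  assoc : ∀ a b c : V, m (m a b) c = m a (m b c)
  e_mem : e ∈ g 0
  one_mul : ∀ a : V, m e a = a
  mul_one : ∀ a : V, m a e = a
  comm : SuperComm K g m
  p_graded : GradedMul K g p
  anti : ∀ i j : ZMod 2, ∀ x ∈ g i, ∀ y ∈ g j, p x y = -(sgn K (i * j)) • p y x
  jacobi : ∀ i j k : ZMod 2, ∀ x ∈ g i, ∀ y ∈ g j, ∀ z ∈ g k,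
    p x (p y z) = p (p x y) z + sgn K (i * j) • p y (p x z)
  leibniz : ∀ j k : ZMod 2, ∀ a : V, ∀ b ∈ g j, ∀ c ∈ g k,
    p (m a b) c = m a (p b c) + sgn K (j * k) • m (p a c) b

/-- The `ZMod 2`-grading of the Kantor double `A ⊕ Ā`: the degree-`i` part is
`A_i ⊕ (Ā)_i` where `(Ā)_i = A_{i+1}` (i.e. `|ā| = 1 - |a|`). -/
def kanGrading (g : ZMod 2 → Submodule K V) : ZMod 2 → Submodule K (V × V) :=
  fun i => (g i).prod (g (i + 1))

/-- The defining multiplication rules of the Kantor double `Kan(A) = A ⊕ Ā` of a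
Poisson superalgebra `(A, m, p)`: `a•b = ab`, `a•b̄ = (ab)‾`, `ā•b = (-1)^{|b|}(ab)‾`,
`ā•b̄ = (-1)^{|b|}{a,b}`; an element `(a, b) : V × V` represents `a + b̄`. -/
structure KantorRules (g : ZMod 2 → Submodule K V) (m p : V →ₗ[K] V →ₗ[K] V)
    (μ : V × V →ₗ[K] V × V →ₗ[K] V × V) : Prop where
  plain_plain : ∀ a b : V, μ (a, 0) (b, 0) = (m a b, 0)
  plain_bar : ∀ a b : V, μ (a, 0) (0, b) = (0, m a b)
  bar_plain : ∀ a : V, ∀ j : ZMod 2, ∀ b ∈ g j, μ (0, a) (b, 0) = (0, sgn K j • m a b)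
  bar_bar : ∀ a : V, ∀ j : ZMod 2, ∀ b ∈ g j, μ (0, a) (0, b) = (sgn K j • p a b, 0)

/-- The unit `1` of the Jordan double `Jor(L) = ⟨1⟩ ⊕ L ⊕ ⟨1̄⟩ ⊕ L̄`; an element
`((α, x), (β, y))` of the carrier `(K × V) × (K × V)` represents `α1 + x + β1̄ + ȳ`. -/
def jOne (V : Type) [AddCommGroup V] [Module K V] : (K × V) × (K × V) := ((1, 0), (0, 0))

/-- The odd element `1̄` of the Jordan double `Jor(L)`. -/
def jBarOne (V : Type) [AddCommGroup V] [Module K V] : (K × V) × (K × V) := ((0, 0), (1, 0))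

/-- The embedding `L → Jor(L)`, `x ↦ x`. -/
def inclL (V : Type) [AddCommGroup V] [Module K V] : V →ₗ[K] (K × V) × (K × V) :=
  (LinearMap.inl K (K × V) (K × V)).comp (LinearMap.inr K K V)

/-- The embedding `L → Jor(L)`, `x ↦ x̄`. -/
def inclLBar (V : Type) [AddCommGroup V] [Module K V] : V →ₗ[K] (K × V) × (K × V) :=
  (LinearMap.inr K (K × V) (K × V)).comp (LinearMap.inr K K V)

/-- The `ZMod 2`-grading of `Jor(L)`: even part `⟨1⟩ ⊕ L₀ ⊕ L̄₁`, odd part `L₁ ⊕ ⟨1̄⟩ ⊕ L̄₀`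
(recall `|x̄| = 1 - |x|` and `1̄` is odd). -/
def jorGrading (g : ZMod 2 → Submodule K V) : ZMod 2 → Submodule K ((K × V) × (K × V)) :=
  fun i =>
    ((if i = 0 then (⊤ : Submodule K K) else ⊥).prod (g i)).prod
      ((if i = 0 then (⊥ : Submodule K K) else ⊤).prod (g (i + 1)))

/-- The defining multiplication rules of the Jordan double `Jor(L)` of a Lie
superalgebra `(L, [,])`: `1` is the unit, `x̄ • ȳ = [x,y]`, `x • 1̄ = x̄`,
`1̄ • x = (-1)^{|x|} x̄`, and all other products of `1, L, 1̄, L̄` vanish. -/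
structure JorRules (g : ZMod 2 → Submodule K V) (br : V →ₗ[K] V →ₗ[K] V)
    (μ : (K × V) × (K × V) →ₗ[K] (K × V) × (K × V) →ₗ[K] (K × V) × (K × V)) : Prop where
  one_mul : ∀ w, μ (jOne K V) w = w
  mul_one : ∀ w, μ w (jOne K V) = w
  l_l : ∀ x y : V, μ (inclL K V x) (inclL K V y) = 0
  l_lbar : ∀ x y : V, μ (inclL K V x) (inclLBar K V y) = 0
  lbar_l : ∀ x y : V, μ (inclLBar K V x) (inclL K V y) = 0
  lbar_lbar : ∀ x y : V, μ (inclLBar K V x) (inclLBar K V y) = inclL K V (br x y)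
  l_obar : ∀ x : V, μ (inclL K V x) (jBarOne K V) = inclLBar K V x
  obar_l : ∀ i : ZMod 2, ∀ x ∈ g i,
    μ (jBarOne K V) (inclL K V x) = sgn K i • inclLBar K V x
  obar_obar : μ (jBarOne K V) (jBarOne K V) = 0
  obar_lbar : ∀ x : V, μ (jBarOne K V) (inclLBar K V x) = 0
  lbar_obar : ∀ x : V, μ (inclLBar K V x) (jBarOne K V) = 0

/-- An algebra `(V, μ)` is just infinite if it is infinite-dimensional and every
nonzero ideal has finite codimension. -/
def JustInfinite (μ : V →ₗ[K] V →ₗ[K] V) : Prop :=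
  ¬ FiniteDimensional K V ∧
    ∀ I : Submodule K V, IsIdeal K μ I → I ≠ ⊥ → FiniteDimensional K (V ⧸ I)

end
/-- For every element `a` of the augmentation ideal
`J° = L ⊕ ⟨1̄⟩ ⊕ L̄` of `Jor(L)` one has `(a²)² = 0`. -/
theorem jordan_double_square_square_zero
    (K : Type) [Field K] (hchar : (2 : K) ≠ 0)
    {V : Type} [AddCommGroup V] [Module K V]
    (g : ZMod 2 → Submodule K V) (br : V →ₗ[K] V →ₗ[K] V)
    (hL : IsLieSuper K g br)
    (μ : (K × V) × (K × V) →ₗ[K] (K × V) × (K × V) →ₗ[K] (K × V) × (K × V))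
    (hμ : JorRules K g br μ) :
    ∀ a ∈ ((⊥ : Submodule K K).prod ⊤).prod (⊤ : Submodule K (K × V)),
      μ (μ a a) (μ a a) = 0 := by
  intro a ha
  -- decompose membership
  obtain ⟨⟨h1, -⟩, -⟩ := ha
  -- a = inclL u + β • 1̄ + inclLBar w
  set u := a.1.2 with hu
  set β := a.2.1 with hβ
  set w := a.2.2 with hw
  have ha' : a = inclL K V u + β • jBarOne K V + inclLBar K V w := by
    have h0 : a.1.1 = 0 := h1
    ext <;> simp [inclL, jBarOne, inclLBar, h0, hu, hβ, hw]
  -- decompose u = u₀ + u₁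
  have htop : (⊤ : Submodule K V) ≤ g 0 ⊔ g 1 := by
    rw [← hL.internal.submodule_iSup_eq_top]
    refine iSup_le fun i => ?_
    fin_cases i
    · exact le_sup_left
    · exact le_sup_right
  obtain ⟨u₀, h0, u₁, h1', huu⟩ := Submodule.mem_sup.mp (htop (Submodule.mem_top (x := u)))
  have brself : ∀ x ∈ g 0, br x x = 0 := by
    intro x hx
    have := hL.anti 0 0 x hx x hx
    have h2 : (2 : K) • br x x = 0 := by
      rw [two_smul]
      nth_rewrite 1 [this]
      simp [sgn]
    exact (smul_eq_zero.mp h2).resolve_left hchar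
  have e0 := hμ.obar_l 0 u₀ h0
  have e1 := hμ.obar_l 1 u₁ h1'
  have s0 : sgn K 0 = 1 := by simp [sgn]
  have s1 : sgn K 1 = -1 := by simp [sgn]
  rw [s0, one_smul] at e0
  rw [s1] at e1
  -- compute a²
  have hsq : μ a a = inclL K V (br w w) + (β • inclLBar K V u₀ + β • inclLBar K V u₀) := by
    rw [ha', ← huu, map_add, map_add, map_add]
    simp only [LinearMap.add_apply, map_add, map_smul, LinearMap.smul_apply,
      hμ.l_l, hμ.l_lbar, hμ.lbar_l, hμ.lbar_lbar, hμ.l_obar, hμ.obar_obar,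
      hμ.obar_lbar, hμ.lbar_obar, e0, e1, map_add]
    module
  have key : μ (μ a a) (μ a a) = 0 := by
    rw [hsq]
    have h2u : u₀ + u₀ ∈ g 0 := (g 0).add_mem h0 h0
    simp only [map_add, LinearMap.add_apply, map_smul, LinearMap.smul_apply,
      hμ.l_l, hμ.l_lbar, hμ.lbar_l, hμ.lbar_lbar]
    have : br u₀ u₀ = 0 := brself u₀ h0
    simp [this]
  exact key
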